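/- Let R be a (not necessarily unital) ring and [R,R] the ideal generated by all additive commutators pr − rp. Then [R,R] equals the additive subgroup of R generated by elements of the form s − t where s,t ∈ R and s ∼_s^1 t (with ∼_s^1 taken in the multiplicative semigroup of R). -/

import Mathlib

/-- `s ∼ₛ¹ t`: `s = p₁⋯pₙ` and `t = p_{f(1)}⋯p_{f(n)}` for some `p_i ∈ S¹` and a
permutation `f` of `{1,…,n}` (encoded as a list permutation). -/
def SimS1 {S : Type*} [Semigroup S] (s t : S) : Prop :=
  ∃ l l' : List (WithOne S), l.Perm l' ∧ (s : WithOne S) = l.prod ∧ (t : WithOne S) = l'.prod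

/-- `∼ₛ`: the transitive closure of `∼ₛ¹`. -/
def SimS {S : Type*} [Semigroup S] : S → S → Prop := Relation.TransGen SimS1

lemma simS1_mul_left {S : Type*} [Semigroup S] (a : S) {s t : S} (h : SimS1 s t) :
    SimS1 (a * s) (a * t) := by
  obtain ⟨l, l', hp, hs, ht⟩ := h
  exact ⟨(a : WithOne S) :: l, (a : WithOne S) :: l', hp.cons _,
    by simp [hs], by simp [ht]⟩

lemma simS1_mul_right {S : Type*} [Semigroup S] (a : S) {s t : S} (h : SimS1 s t) :
    SimS1 (s * a) (t * a) := by
  obtain ⟨l, l', hp, hs, ht⟩ := h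
  exact ⟨l ++ [(a : WithOne S)], l' ++ [(a : WithOne S)], hp.append_right _,
    by simp [hs], by simp [ht]⟩

lemma simS1_sub_mem_span {R : Type*} [NonUnitalRing R] {s t : R} (h : SimS1 s t) :
    s - t ∈ TwoSidedIdeal.span {x : R | ∃ p r : R, x = p * r - r * p} := by
  set I := TwoSidedIdeal.span {x : R | ∃ p r : R, x = p * r - r * p} with hI
  rw [← TwoSidedIdeal.rel_iff]
  obtain ⟨l, l', hp, hs, ht⟩ := h
  letI : CommSemigroup I.ringCon.Quotient :=
    { mul_comm := fun a b => by
        induction a using Quotient.inductionOn'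
        induction b using Quotient.inductionOn'
        rename_i p r
        show ((p * r : R) : I.ringCon.Quotient) = ((r * p : R) : I.ringCon.Quotient)
        rw [I.ringCon.eq, TwoSidedIdeal.rel_iff]
        exact TwoSidedIdeal.subset_span ⟨p, r, rfl⟩ }
  let φ : R →ₙ* I.ringCon.Quotient := ⟨fun x => (x : I.ringCon.Quotient), fun _ _ => rfl⟩
  have key : ((s : I.ringCon.Quotient) : WithOne I.ringCon.Quotient)
      = ((t : I.ringCon.Quotient) : WithOne I.ringCon.Quotient) := by
    calc ((s : I.ringCon.Quotient) : WithOne I.ringCon.Quotient)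
        = (WithOne.map φ) (s : WithOne R) := by simp [φ]; rfl
      _ = (l.map (WithOne.map φ)).prod := by rw [hs, ← show ⇑(WithOne.mapMulHom φ) = WithOne.map φ from funext fun x => by cases x <;> rfl, map_list_prod]
      _ = (l'.map (WithOne.map φ)).prod := (hp.map (WithOne.map φ)).prod_eq
      _ = (WithOne.map φ) (t : WithOne R) := by rw [ht, ← show ⇑(WithOne.mapMulHom φ) = WithOne.map φ from funext fun x => by cases x <;> rfl, map_list_prod]
      _ = ((t : I.ringCon.Quotient) : WithOne I.ringCon.Quotient) := by simp [φ]; rfl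
  exact I.ringCon.eq.mp (WithOne.coe_inj.mp key)

/-- For a (not necessarily unital) ring `R`, the two-sided ideal generated by the additive
commutators `pr - rp` equals the additive subgroup generated by elements `s - t` with
`s ∼ₛ¹ t` in the multiplicative semigroup of `R`. -/
theorem commutator_ideal_eq_simS1_addSubgroup {R : Type*} [NonUnitalRing R] :
    (TwoSidedIdeal.span {x : R | ∃ p r : R, x = p * r - r * p} : Set R) =
      (AddSubgroup.closure {x : R | ∃ s t : R, SimS1 s t ∧ x = s - t} : Set R) := by
  set G := AddSubgroup.closure {x : R | ∃ s t : R, SimS1 s t ∧ x = s - t} with hG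
  have hmul_left : ∀ a x : R, x ∈ G → a * x ∈ G := by
    intro a x hx
    induction hx using AddSubgroup.closure_induction with
    | mem y hy =>
      obtain ⟨s, t, hst, rfl⟩ := hy
      rw [mul_sub]
      exact AddSubgroup.subset_closure ⟨a * s, a * t, simS1_mul_left a hst, rfl⟩
    | zero => simpa using G.zero_mem
    | add y z _ _ hy hz => rw [mul_add]; exact G.add_mem hy hz
    | neg y _ hy => rw [mul_neg]; exact G.neg_mem hy
  have hmul_right : ∀ a x : R, x ∈ G → x * a ∈ G := by
    intro a x hx
    induction hx using AddSubgroup.closure_induction with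
    | mem y hy =>
      obtain ⟨s, t, hst, rfl⟩ := hy
      rw [sub_mul]
      exact AddSubgroup.subset_closure ⟨s * a, t * a, simS1_mul_right a hst, rfl⟩
    | zero => simpa using G.zero_mem
    | add y z _ _ hy hz => rw [add_mul]; exact G.add_mem hy hz
    | neg y _ hy => rw [neg_mul]; exact G.neg_mem hy
  apply subset_antisymm
  · intro x hx
    let J : TwoSidedIdeal R := .mk' (G : Set R) G.zero_mem (fun h h' => G.add_mem h h')
      (fun h => G.neg_mem h) (fun h => hmul_left _ _ h) (fun h => hmul_right _ _ h)
    have : x ∈ J := by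
      rw [SetLike.mem_coe] at hx
      refine TwoSidedIdeal.mem_span_iff.mp hx J ?_
      rintro y ⟨p, r, rfl⟩
      rw [SetLike.mem_coe, TwoSidedIdeal.mem_mk']
      exact AddSubgroup.subset_closure ⟨p * r, r * p,
        ⟨[(p : WithOne R), (r : WithOne R)], [(r : WithOne R), (p : WithOne R)],
          List.Perm.swap _ _ _, by simp, by simp⟩, rfl⟩
    rwa [TwoSidedIdeal.mem_mk'] at this
  · intro x hx
    rw [SetLike.mem_coe] at hx ⊢
    induction hx using AddSubgroup.closure_induction with
    | mem y hy =>
      obtain ⟨s, t, hst, rfl⟩ := hy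
      exact simS1_sub_mem_span hst
    | zero => simpa using (TwoSidedIdeal.span _).zero_mem
    | add y z _ _ hy hz => exact (TwoSidedIdeal.span _).add_mem hy hz
    | neg y _ hy => exact (TwoSidedIdeal.span _).neg_mem hy
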